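/- For any M > 0 there exists c(M) > 0 such that for every w ∈ W^{1,2}(ℝ³) and every measurable set V ⊂ ℝ³ with Lebesgue measure |V| ≤ M, one has ‖w‖²_{L²(ℝ³)} ≤ c(M)·(‖∇w‖²_{L²(ℝ³)} + ∫_{ℝ³∖V} w² dy). -/

import Mathlib

open MeasureTheory MeasureTheory.Measure Set ENNReal

local notation "E3" => EuclideanSpace ℝ (Fin 3)

lemma translation_bound (w : E3 → ℝ) (hw : Differentiable ℝ w) (h : E3) :
    ∫⁻ x, ENNReal.ofReal ((w (x + h) - w x) ^ 2) ≤
      ENNReal.ofReal (‖h‖ ^ 2) * ∫⁻ x, ENNReal.ofReal (‖fderiv ℝ w x‖ ^ 2) := by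
  set D := ∫⁻ x, ENNReal.ofReal (‖fderiv ℝ w x‖ ^ 2) with hDdef
  rcases eq_or_ne h 0 with rfl | hne
  · simp
  by_cases hD : D = ⊤
  · rw [hD, ENNReal.mul_top (ENNReal.ofReal_pos.mpr (pow_pos (norm_pos_iff.mpr hne) 2)).ne']
    exact le_top
  have mfd : Measurable (fderiv ℝ w) := measurable_fderiv ℝ w
  have mcont : Continuous fun p : E3 × ℝ => p.1 + p.2 • h := by fun_prop
  have mFp : Measurable fun p : E3 × ℝ =>
      ENNReal.ofReal (‖fderiv ℝ w (p.1 + p.2 • h)‖ ^ 2) :=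
    (((mfd.comp mcont.measurable).norm.pow_const 2)).ennreal_ofReal
  have htrans : ∀ t : ℝ, ∫⁻ x, ENNReal.ofReal (‖fderiv ℝ w (x + t • h)‖ ^ 2) = D := fun t =>
    lintegral_add_right_eq_self (fun x => ENNReal.ofReal (‖fderiv ℝ w x‖ ^ 2)) (t • h)
  have hswap : ∫⁻ x, ∫⁻ t in Icc (0:ℝ) 1,
      ENNReal.ofReal (‖fderiv ℝ w (x + t • h)‖ ^ 2) ∂volume ∂volume = D := by
    rw [lintegral_lintegral_swap mFp.aemeasurable]
    simp only [htrans]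
    simp [Real.volume_Icc]
  have hinmeas : Measurable fun x : E3 => ∫⁻ t in Icc (0:ℝ) 1,
      ENNReal.ofReal (‖fderiv ℝ w (x + t • h)‖ ^ 2) ∂volume :=
    Measurable.lintegral_prod_right mFp
  have hfin : ∀ᵐ x : E3, (∫⁻ t in Icc (0:ℝ) 1,
      ENNReal.ofReal (‖fderiv ℝ w (x + t • h)‖ ^ 2) ∂volume) < ⊤ :=
    ae_lt_top hinmeas (by rw [hswap]; exact hD)
  have key : ∀ x : E3, (∫⁻ t in Icc (0:ℝ) 1,
      ENNReal.ofReal (‖fderiv ℝ w (x + t • h)‖ ^ 2) ∂volume) < ⊤ →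
      ENNReal.ofReal ((w (x + h) - w x) ^ 2) ≤ ENNReal.ofReal (‖h‖ ^ 2) *
        ∫⁻ t in Icc (0:ℝ) 1, ENNReal.ofReal (‖fderiv ℝ w (x + t • h)‖ ^ 2) ∂volume := by
    intro x hx
    set g' : ℝ → ℝ := fun t => (fderiv ℝ w (x + t • h)) h with hg'def
    have mγ : Measurable fun t : ℝ => fderiv ℝ w (x + t • h) :=
      mfd.comp (by fun_prop)
    have mg' : Measurable g' :=
      ((ContinuousLinearMap.apply ℝ ℝ h).continuous.measurable).comp mγ
    have mF : Measurable fun t : ℝ => ‖fderiv ℝ w (x + t • h)‖ ^ 2 :=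
      (mγ.norm).pow_const 2
    have hF_int : IntegrableOn (fun t => ‖fderiv ℝ w (x + t • h)‖ ^ 2) (Icc (0:ℝ) 1) volume := by
      refine ⟨mF.aestronglyMeasurable, ?_⟩
      rw [hasFiniteIntegral_iff_ofReal (ae_of_all _ fun t => by positivity)]
      exact hx
    have g'le : ∀ t : ℝ, ‖g' t‖ ≤ ‖h‖ * (1 + ‖fderiv ℝ w (x + t • h)‖ ^ 2) := by
      intro t
      have h1 := (fderiv ℝ w (x + t • h)).le_opNorm h
      have h2 : (0:ℝ) ≤ ‖fderiv ℝ w (x + t • h)‖ := norm_nonneg _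
      have h3 : (0:ℝ) ≤ ‖h‖ := norm_nonneg _
      nlinarith [sq_nonneg (1 - ‖fderiv ℝ w (x + t • h)‖)]
    have g'int : IntegrableOn g' (Icc (0:ℝ) 1) volume := by
      refine Integrable.mono' ?_ mg'.aestronglyMeasurable (ae_of_all _ g'le)
      exact ((integrableOn_const (by simp [Real.volume_Icc])).add hF_int).const_mul _
    have hderiv : ∀ t : ℝ, HasDerivAt (fun s : ℝ => w (x + s • h)) (g' t) t := by
      intro t
      have h1 : HasDerivAt (fun s : ℝ => x + s • h) h t := by
        simpa using ((hasDerivAt_id t).smul_const h).const_add x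
      exact ((hw (x + t • h)).hasFDerivAt.comp_hasDerivAt t h1)
    have hFTC : ∫ t in (0:ℝ)..1, g' t = w (x + h) - w x := by
      have := intervalIntegral.integral_eq_sub_of_hasDerivAt (fun t _ => hderiv t)
        ((intervalIntegrable_iff_integrableOn_Icc_of_le (by norm_num)).mpr g'int)
      simpa using this
    have habs : |w (x + h) - w x| ≤ ∫ t in Icc (0:ℝ) 1, |g' t| := by
      rw [← hFTC, integral_Icc_eq_integral_Ioc,
        ← intervalIntegral.integral_of_le (by norm_num : (0:ℝ) ≤ 1)]
      exact intervalIntegral.abs_integral_le_integral_abs (by norm_num)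
    have e1 : ENNReal.ofReal ((w (x + h) - w x) ^ 2) ≤
        (∫⁻ t in Icc (0:ℝ) 1, ENNReal.ofReal |g' t|) ^ 2 := by
      rw [← sq_abs, ENNReal.ofReal_pow (abs_nonneg _)]
      refine pow_le_pow_left' ?_ 2
      refine (ENNReal.ofReal_le_ofReal habs).trans (le_of_eq ?_)
      exact ofReal_integral_eq_lintegral_ofReal g'int.abs (ae_of_all _ fun t => abs_nonneg _)
    have e2 : (∫⁻ t in Icc (0:ℝ) 1, ENNReal.ofReal |g' t|) ^ 2 ≤
        ∫⁻ t in Icc (0:ℝ) 1, (ENNReal.ofReal |g' t|) ^ 2 := by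
      have hconj : Real.HolderConjugate 2 2 := by constructor <;> norm_num
      have hae : AEMeasurable (fun t => ENNReal.ofReal |g' t|)
          (volume.restrict (Icc (0:ℝ) 1)) := (mg'.abs.ennreal_ofReal).aemeasurable
      have H := ENNReal.lintegral_mul_le_Lp_mul_Lq (volume.restrict (Icc (0:ℝ) 1)) hconj hae
        (aemeasurable_const (b := (1:ℝ≥0∞)))
      simp only [Pi.mul_apply, mul_one, ENNReal.one_rpow, lintegral_const,
        Measure.restrict_apply, univ_inter, MeasurableSet.univ] at H
      rw [Real.volume_Icc] at H
      norm_num at H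
      refine le_trans (pow_le_pow_left' H 2) (le_of_eq ?_)
      rw [← ENNReal.rpow_natCast _ 2, ← ENNReal.rpow_mul]
      norm_num
    have e3 : ∀ t : ℝ, (ENNReal.ofReal |g' t|) ^ 2 ≤
        ENNReal.ofReal (‖h‖ ^ 2) * ENNReal.ofReal (‖fderiv ℝ w (x + t • h)‖ ^ 2) := by
      intro t
      rw [← ENNReal.ofReal_pow (abs_nonneg _), ← ENNReal.ofReal_mul (by positivity)]
      apply ENNReal.ofReal_le_ofReal
      have h1 := (fderiv ℝ w (x + t • h)).le_opNorm h
      have h2 : |g' t| ^ 2 ≤ (‖fderiv ℝ w (x + t • h)‖ * ‖h‖) ^ 2 := by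
        apply pow_le_pow_left₀ (abs_nonneg _)
        simpa [Real.norm_eq_abs] using h1
      nlinarith [h2]
    calc ENNReal.ofReal ((w (x + h) - w x) ^ 2)
        ≤ (∫⁻ t in Icc (0:ℝ) 1, ENNReal.ofReal |g' t|) ^ 2 := e1
      _ ≤ ∫⁻ t in Icc (0:ℝ) 1, (ENNReal.ofReal |g' t|) ^ 2 := e2
      _ ≤ ∫⁻ t in Icc (0:ℝ) 1,
            ENNReal.ofReal (‖h‖ ^ 2) * ENNReal.ofReal (‖fderiv ℝ w (x + t • h)‖ ^ 2) :=
          lintegral_mono fun t => e3 t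
      _ = ENNReal.ofReal (‖h‖ ^ 2) *
            ∫⁻ t in Icc (0:ℝ) 1, ENNReal.ofReal (‖fderiv ℝ w (x + t • h)‖ ^ 2) :=
          lintegral_const_mul' _ _ ENNReal.ofReal_ne_top
  calc ∫⁻ x, ENNReal.ofReal ((w (x + h) - w x) ^ 2)
      ≤ ∫⁻ x, ENNReal.ofReal (‖h‖ ^ 2) *
          ∫⁻ t in Icc (0:ℝ) 1, ENNReal.ofReal (‖fderiv ℝ w (x + t • h)‖ ^ 2) ∂volume :=
        lintegral_mono_ae (hfin.mono fun x hx => key x hx)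
    _ = ENNReal.ofReal (‖h‖ ^ 2) * ∫⁻ x, ∫⁻ t in Icc (0:ℝ) 1,
          ENNReal.ofReal (‖fderiv ℝ w (x + t • h)‖ ^ 2) ∂volume ∂volume :=
        lintegral_const_mul' _ _ ENNReal.ofReal_ne_top
    _ = ENNReal.ofReal (‖h‖ ^ 2) * D := by rw [hswap]

lemma average_bound (f : E3 → ℝ≥0∞) (hf : Measurable f) (hftop : ∀ y, f y ≠ ⊤)
    (V : Set E3) (hV : MeasurableSet V) (hVfin : volume V ≠ ⊤) (R : ℝ) :
    ∫⁻ h in Metric.ball (0:E3) R, ∫⁻ x in V, f (x + h) ∂volume ∂volume ≤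
      volume V * ∫⁻ y, f y := by
  have step1 : ∀ h : E3, ∫⁻ x in V, f (x + h) ∂volume
      = ∫⁻ y, V.indicator 1 (y - h) * f y := by
    intro h
    have e1 : ∫⁻ x in V, f (x + h) ∂volume = ∫⁻ x, V.indicator 1 x * f (x + h) := by
      rw [← lintegral_indicator hV (fun x => f (x + h))]
      congr 1; funext x
      by_cases hx : x ∈ V <;>
        simp [Set.indicator_of_mem, Set.indicator_of_notMem, hx]
    have e2 : ∫⁻ x, (fun y => V.indicator 1 (y - h) * f y) (x + h) ∂volume
        = ∫⁻ y, V.indicator 1 (y - h) * f y :=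
      lintegral_add_right_eq_self (fun y => V.indicator 1 (y - h) * f y) h
    rw [e1, ← e2]
    simp
  simp_rw [step1]
  have hmeas : AEMeasurable (Function.uncurry fun (h : E3) (y : E3) =>
      V.indicator 1 (y - h) * f y)
      ((volume.restrict (Metric.ball (0:E3) R)).prod volume) := by
    apply Measurable.aemeasurable
    apply Measurable.mul
    · exact (measurable_one.indicator hV).comp (measurable_snd.sub measurable_fst)
    · exact hf.comp measurable_snd
  rw [lintegral_lintegral_swap hmeas]
  have inner_le : ∀ y : E3,
      ∫⁻ h in Metric.ball (0:E3) R, V.indicator 1 (y - h) * f y ∂volume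
        ≤ volume V * f y := by
    intro y
    rw [lintegral_mul_const' (f y) _ (hftop y)]
    apply mul_le_mul_left
    calc ∫⁻ h in Metric.ball (0:E3) R, V.indicator 1 (y - h) ∂volume
        ≤ ∫⁻ h, V.indicator 1 (y - h) := setLIntegral_le_lintegral _ _
      _ = ∫⁻ z, V.indicator 1 z := (measurePreserving_sub_left volume y).lintegral_comp
          (measurable_one.indicator hV)
      _ = volume V := lintegral_indicator_one hV
  calc ∫⁻ y, ∫⁻ h in Metric.ball (0:E3) R, V.indicator 1 (y - h) * f y ∂volume ∂volume
      ≤ ∫⁻ y, volume V * f y := lintegral_mono inner_le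
    _ = volume V * ∫⁻ y, f y := lintegral_const_mul' _ _ hVfin

/-- Poincaré-type inequality on `ℝ³`: the `L²` norm of a `W^{1,2}` function is
controlled by its gradient and its `L²` norm outside a set of measure at most `M`. -/
theorem poincare_outside_small_set (M : ℝ) (hM : 0 < M) :
    ∃ c : ℝ, 0 < c ∧
      ∀ w : EuclideanSpace ℝ (Fin 3) → ℝ, Differentiable ℝ w →
        MemLp w 2 volume → MemLp (fun y => ‖fderiv ℝ w y‖) 2 volume →
        ∀ V : Set (EuclideanSpace ℝ (Fin 3)), MeasurableSet V →
          volume V ≤ ENNReal.ofReal M →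
          ∫ y, (w y) ^ 2 ≤
            c * ((∫ y, ‖fderiv ℝ w y‖ ^ 2) + ∫ y in Vᶜ, (w y) ^ 2) := by
  -- choice of the radius R
  set v : ℝ := (volume (Metric.ball (0:E3) 1)).toReal with hv
  have hvball_top : volume (Metric.ball (0:E3) 1) ≠ ⊤ := measure_ball_lt_top.ne
  have hvpos : 0 < v :=
    ENNReal.toReal_pos (Metric.measure_ball_pos _ _ one_pos).ne' hvball_top
  set R : ℝ := max 1 (4 * M / v) with hRdef
  have hR1 : (1:ℝ) ≤ R := le_max_left _ _
  have hRpos : (0:ℝ) < R := lt_of_lt_of_le one_pos hR1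
  have hball_fin : volume (Metric.ball (0:E3) R) ≠ ⊤ := measure_ball_lt_top.ne
  have hball_pos : 0 < volume (Metric.ball (0:E3) R) :=
    Metric.measure_ball_pos _ _ hRpos
  have hball : ENNReal.ofReal (4 * M) ≤ volume (Metric.ball (0:E3) R) := by
    rw [Measure.addHaar_ball _ _ hRpos.le]
    have hfr : Module.finrank ℝ (EuclideanSpace ℝ (Fin 3)) = 3 := by
      simp [finrank_euclideanSpace]
    rw [hfr]
    have hv1 : volume (Metric.ball (0:E3) 1) = ENNReal.ofReal v :=
      (ENNReal.ofReal_toReal hvball_top).symm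
    rw [hv1, ← ENNReal.ofReal_mul (by positivity)]
    apply ENNReal.ofReal_le_ofReal
    have hRR : 4 * M / v ≤ R := le_max_right _ _
    have hR3 : 4 * M / v ≤ R ^ 3 := le_trans hRR (by
      nlinarith [mul_nonneg (mul_nonneg (sub_nonneg.mpr hR1) hRpos.le) hRpos.le,
        mul_nonneg (sub_nonneg.mpr hR1) hRpos.le])
    calc 4 * M = (4 * M / v) * v := by field_simp
      _ ≤ R ^ 3 * v := by nlinarith
  refine ⟨4 * R ^ 2 + 2, by positivity, ?_⟩
  intro w hw hw2 hf2 V hV hVM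
  have hwc : Continuous w := hw.continuous
  set f : E3 → ℝ≥0∞ := fun y => ENNReal.ofReal (w y ^ 2) with hfdef
  have hfm : Measurable f := ((hwc.measurable).pow_const 2).ennreal_ofReal
  set S := ∫⁻ y, f y with hSdef
  set D := ∫⁻ y, ENNReal.ofReal (‖fderiv ℝ w y‖ ^ 2) with hDdef
  set Sc := ∫⁻ y in Vᶜ, f y with hScdef
  set SV := ∫⁻ y in V, f y with hSVdef
  have hwsq_int : Integrable (fun y => w y ^ 2) := hw2.integrable_sq
  have hfd_int : Integrable (fun y => ‖fderiv ℝ w y‖ ^ 2) := hf2.integrable_sq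
  have hS_top : S ≠ ⊤ := hwsq_int.lintegral_lt_top.ne
  have hD_top : D ≠ ⊤ := hfd_int.lintegral_lt_top.ne
  have hsplit : SV + Sc = S := lintegral_add_compl f hV
  have hSV_top : SV ≠ ⊤ := (lt_of_le_of_lt (setLIntegral_le_lintegral _ _) hS_top.lt_top).ne
  have hSc_top : Sc ≠ ⊤ := (lt_of_le_of_lt (setLIntegral_le_lintegral _ _) hS_top.lt_top).ne
  have hVfin : volume V ≠ ⊤ := (lt_of_le_of_lt hVM ofReal_lt_top).ne
  -- the main estimate, for each translation h in the ball
  have main_h : ∀ h ∈ Metric.ball (0:E3) R,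
      SV ≤ 2 * ENNReal.ofReal (R ^ 2) * D + 2 * ∫⁻ x in V, f (x + h) ∂volume := by
    intro h hh
    have hnorm : ‖h‖ < R := by simpa using hh
    have ptwise : ∀ x : E3, f x ≤
        2 * ENNReal.ofReal ((w (x + h) - w x) ^ 2) + 2 * f (x + h) := by
      intro x
      have hr : w x ^ 2 ≤ 2 * (w (x + h) - w x) ^ 2 + 2 * w (x + h) ^ 2 := by nlinarith [sq_nonneg (w x - 2 * w (x + h))]
      calc f x = ENNReal.ofReal (w x ^ 2) := rfl
        _ ≤ ENNReal.ofReal (2 * (w (x + h) - w x) ^ 2 + 2 * w (x + h) ^ 2) :=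
            ENNReal.ofReal_le_ofReal hr
        _ ≤ 2 * ENNReal.ofReal ((w (x + h) - w x) ^ 2) + 2 * f (x + h) := by
            rw [ENNReal.ofReal_add (by positivity) (by positivity),
              ENNReal.ofReal_mul (by norm_num), ENNReal.ofReal_mul (by norm_num)]
            simp [hfdef]
    have mΔ : Measurable fun x : E3 => 2 * ENNReal.ofReal ((w (x + h) - w x) ^ 2) := by
      apply Measurable.const_mul
      exact ((((hwc.comp (continuous_id.add continuous_const)).sub hwc).pow 2).measurable).ennreal_ofReal
    calc SV ≤ ∫⁻ x in V, (2 * ENNReal.ofReal ((w (x + h) - w x) ^ 2) + 2 * f (x + h)) ∂volume :=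
          lintegral_mono ptwise
      _ = (∫⁻ x in V, 2 * ENNReal.ofReal ((w (x + h) - w x) ^ 2) ∂volume)
            + ∫⁻ x in V, 2 * f (x + h) ∂volume := lintegral_add_left mΔ _
      _ ≤ (∫⁻ x, 2 * ENNReal.ofReal ((w (x + h) - w x) ^ 2))
            + ∫⁻ x in V, 2 * f (x + h) ∂volume :=
          add_le_add_left (setLIntegral_le_lintegral _ _) _
      _ = 2 * (∫⁻ x, ENNReal.ofReal ((w (x + h) - w x) ^ 2))
            + 2 * ∫⁻ x in V, f (x + h) ∂volume := by
          rw [lintegral_const_mul' _ _ (by norm_num), lintegral_const_mul' _ _ (by norm_num)]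
      _ ≤ 2 * (ENNReal.ofReal (‖h‖ ^ 2) * D) + 2 * ∫⁻ x in V, f (x + h) ∂volume := by
          gcongr
          exact translation_bound w hw h
      _ ≤ 2 * ENNReal.ofReal (R ^ 2) * D + 2 * ∫⁻ x in V, f (x + h) ∂volume := by
          rw [mul_assoc]
          gcongr
  -- integrate over h in the ball
  have int_main : volume (Metric.ball (0:E3) R) * SV ≤
      (2 * ENNReal.ofReal (R ^ 2) * D) * volume (Metric.ball (0:E3) R)
        + 2 * (volume V * S) := by
    have step : volume (Metric.ball (0:E3) R) * SV =
        ∫⁻ _ in Metric.ball (0:E3) R, SV ∂volume := by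
      rw [lintegral_const, Measure.restrict_apply MeasurableSet.univ, univ_inter, mul_comm]
    rw [step]
    have mono : ∫⁻ h in Metric.ball (0:E3) R, SV ∂volume ≤
        ∫⁻ h in Metric.ball (0:E3) R,
          (2 * ENNReal.ofReal (R ^ 2) * D + 2 * ∫⁻ x in V, f (x + h) ∂volume) ∂volume := by
      apply lintegral_mono_ae
      rw [ae_restrict_iff' Metric.isOpen_ball.measurableSet]
      exact ae_of_all _ main_h
    refine mono.trans ?_
    have minner : Measurable fun h : E3 => ∫⁻ x in V, f (x + h) ∂volume := by
      apply Measurable.lintegral_prod_right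
      exact hfm.comp ((measurable_snd.add measurable_fst))
    rw [lintegral_add_left measurable_const, lintegral_const,
      Measure.restrict_apply MeasurableSet.univ, univ_inter,
      lintegral_const_mul' _ _ (by norm_num)]
    gcongr
    exact average_bound f hfm (fun y => ENNReal.ofReal_ne_top) V hV hVfin R
  -- pass to real numbers
  set b : ℝ := (volume (Metric.ball (0:E3) R)).toReal with hbdef
  have hbpos : 0 < b := ENNReal.toReal_pos hball_pos.ne' hball_fin
  have hb4M : 4 * M ≤ b := by
    have := ENNReal.toReal_mono hball_fin hball
    rwa [ENNReal.toReal_ofReal (by positivity)] at this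
  set s := S.toReal with hsdef
  set d := D.toReal with hddef
  set sv := SV.toReal with hsvdef
  set sc := Sc.toReal with hscdef
  have hs_nonneg : 0 ≤ s := ENNReal.toReal_nonneg
  have hd_nonneg : 0 ≤ d := ENNReal.toReal_nonneg
  have hsc_nonneg : 0 ≤ sc := ENNReal.toReal_nonneg
  have hsplit_real : sv + sc = s := by
    rw [hsvdef, hscdef, hsdef, ← ENNReal.toReal_add hSV_top hSc_top, hsplit]
  have hVM_real : (volume V).toReal ≤ M := by
    have := ENNReal.toReal_mono ofReal_ne_top hVM
    rwa [ENNReal.toReal_ofReal hM.le] at this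
  have int_main_real : b * sv ≤ 2 * R ^ 2 * d * b + 2 * (M * s) := by
    have hrhs_top : (2 * ENNReal.ofReal (R ^ 2) * D) * volume (Metric.ball (0:E3) R)
        + 2 * (volume V * S) ≠ ⊤ := by
      apply ENNReal.add_ne_top.mpr
      constructor
      · exact ENNReal.mul_ne_top (ENNReal.mul_ne_top
          (ENNReal.mul_ne_top (by norm_num) ofReal_ne_top) hD_top) hball_fin
      · exact ENNReal.mul_ne_top (by norm_num) (ENNReal.mul_ne_top hVfin hS_top)
    have h1 := ENNReal.toReal_mono hrhs_top int_main
    rw [ENNReal.toReal_mul, ENNReal.toReal_add (by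
        exact ENNReal.mul_ne_top (ENNReal.mul_ne_top
          (ENNReal.mul_ne_top (by norm_num) ofReal_ne_top) hD_top) hball_fin) (by
        exact ENNReal.mul_ne_top (by norm_num) (ENNReal.mul_ne_top hVfin hS_top)),
      ENNReal.toReal_mul, ENNReal.toReal_mul, ENNReal.toReal_mul, ENNReal.toReal_mul,
      ENNReal.toReal_mul] at h1
    simp only [ENNReal.toReal_ofNat, ENNReal.toReal_ofReal (by positivity : (0:ℝ) ≤ R ^ 2)]
      at h1
    calc b * sv ≤ 2 * R ^ 2 * d * b + 2 * ((volume V).toReal * s) := by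
          exact h1
      _ ≤ 2 * R ^ 2 * d * b + 2 * (M * s) := by nlinarith
  -- final real arithmetic
  have key_real : s ≤ (4 * R ^ 2 + 2) * (d + sc) := by
    have h3 : b * s ≤ 2 * R ^ 2 * d * b + 2 * (M * s) + b * sc := by nlinarith [int_main_real]
    have h4 : b * (s - 4 * R ^ 2 * d - 2 * sc) ≤ b * 0 := by
      nlinarith [mul_nonneg (sub_nonneg.mpr hb4M) hs_nonneg]
    have h5 : s - 4 * R ^ 2 * d - 2 * sc ≤ 0 := (mul_le_mul_iff_right₀ hbpos).mp h4
    nlinarith [mul_nonneg hd_nonneg (sq_nonneg R), mul_nonneg hsc_nonneg (sq_nonneg R)]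
  -- identify the Bochner integrals
  have hs_eq : ∫ y, w y ^ 2 = s := by
    rw [integral_eq_lintegral_of_nonneg_ae (ae_of_all _ fun y => sq_nonneg (w y))
      ((hwc.pow 2).aestronglyMeasurable)]
  have hd_eq : ∫ y, ‖fderiv ℝ w y‖ ^ 2 = d := by
    rw [integral_eq_lintegral_of_nonneg_ae (ae_of_all _ fun y => by positivity)
      (((measurable_fderiv ℝ w).norm.pow_const 2).aestronglyMeasurable)]
  have hsc_eq : ∫ y in Vᶜ, w y ^ 2 = sc := by
    rw [integral_eq_lintegral_of_nonneg_ae (ae_of_all _ fun y => sq_nonneg (w y))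
      ((hwc.pow 2).aestronglyMeasurable.restrict)]
  rw [hs_eq, hd_eq, hsc_eq]
  exact key_real
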